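/- Let P be a tower of normal filters of height δ and G ⊆ P a generic filter (an ultrafilter on the poset meeting suitable dense sets). For X ∈ V_δ, let G_X = {S : S is F_X-positive and S ∈ G}. Then each G_X is a V-normal ultrafilter on P(X) extending F_X, and if X ⊆ Y (both in V_δ) then G_Y projects to G_X: for S ∈ G_Y, {a ∩ X : a ∈ S} ∈ G_X. -/

import Mathlib

universe u

/-- `F` is a normal filter on `𝒫(X)` for a set `X` (in the ZF universe): a proper
filter on the powerset of `X` that is fine and closed under diagonal intersections. -/
structure IsNormalFilterZ (X : ZFSet.{u}) (F : Set ZFSet.{u}) : Prop where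
  mem_sub : ∀ A ∈ F, A ⊆ X.powerset
  inter_mem : ∀ A ∈ F, ∀ B ∈ F, A ∩ B ∈ F
  superset_mem : ∀ A ∈ F, ∀ B : ZFSet.{u}, A ⊆ B → B ⊆ X.powerset → B ∈ F
  proper : (∅ : ZFSet.{u}) ∉ F
  fine : ∀ x ∈ X, ZFSet.sep (fun a => x ∈ a) X.powerset ∈ F
  normal : ∀ A : ZFSet.{u} → ZFSet.{u}, (∀ x ∈ X, A x ∈ F) →
    ZFSet.sep (fun a => ∀ x ∈ a, a ∈ A x) X.powerset ∈ F

/-- A tower of normal filters of height `δ`: each `X ∈ V_δ` (i.e. of rank `< δ`)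
carries a normal filter `F X` on `𝒫(X)`, and for `X ⊆ Y` the filter `F Y` projects
to `F X` (`B ∈ F X` iff `{a ⊆ Y : a ∩ X ∈ B} ∈ F Y`). -/
structure TowerZ (δ : Ordinal.{u}) where
  F : ZFSet.{u} → Set ZFSet.{u}
  normal : ∀ X : ZFSet.{u}, X.rank < δ → IsNormalFilterZ X (F X)
  projects : ∀ X Y : ZFSet.{u}, X.rank < δ → Y.rank < δ → X ⊆ Y →
    ∀ B : ZFSet.{u}, B ⊆ X.powerset →
      (B ∈ F X ↔ ZFSet.sep (fun a => a ∩ X ∈ B) Y.powerset ∈ F Y)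

/-- The tower ordering: `p ≤ q` iff `⋃ p ⊇ ⋃ q` and every `a ∈ p` satisfies
`a ∩ ⋃ q ∈ q`. -/
def Tle (p q : ZFSet.{u}) : Prop :=
  ZFSet.sUnion q ⊆ ZFSet.sUnion p ∧ ∀ a ∈ p, a ∩ ZFSet.sUnion q ∈ q

namespace TowerZ

variable {δ : Ordinal.{u}} (T : TowerZ δ)

/-- `S` is `F X`-positive: a subset of `𝒫(X)` whose complement in `𝒫(X)` is not
in `F X`. -/
def Pos (X S : ZFSet.{u}) : Prop :=
  S ⊆ X.powerset ∧ ZFSet.sep (fun a => a ∉ S) X.powerset ∉ T.F X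

/-- The conditions of the tower: the sets in `V_δ` positive for some `F X`. -/
def Cond (S : ZFSet.{u}) : Prop :=
  ∃ X : ZFSet.{u}, X.rank < δ ∧ T.Pos X S

/-- Compatibility in the tower ordering. -/
def Compat (p q : ZFSet.{u}) : Prop :=
  ∃ r : ZFSet.{u}, T.Cond r ∧ Tle r p ∧ Tle r q

/-- `A` is a maximal antichain of the tower. -/
def MaxAC (A : Set ZFSet.{u}) : Prop :=
  (∀ p ∈ A, T.Cond p) ∧ (∀ p ∈ A, ∀ q ∈ A, p ≠ q → ¬ T.Compat p q) ∧
  (∀ p : ZFSet.{u}, T.Cond p → ∃ q ∈ A, T.Compat p q)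

/-- `G` is a generic filter on the tower: a filter on the poset of conditions
meeting every maximal antichain (of the ground model). -/
def Generic (G : Set ZFSet.{u}) : Prop :=
  (∀ p ∈ G, T.Cond p) ∧
  (∀ p ∈ G, ∀ q : ZFSet.{u}, T.Cond q → Tle p q → q ∈ G) ∧
  (∀ p ∈ G, ∀ q ∈ G, ∃ r ∈ G, Tle r p ∧ Tle r q) ∧
  (∀ A : Set ZFSet.{u}, T.MaxAC A → ∃ p ∈ A, p ∈ G)

/-- `p` forces `q ∈ G`: every condition below `p` is compatible with `q`. -/
def Forces (p q : ZFSet.{u}) : Prop :=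
  ∀ r : ZFSet.{u}, T.Cond r → Tle r p → T.Compat r q

end TowerZ

/-- `p` and `q` are disjoint conditions: for any `Z ∈ V_δ` containing `⋃ p` and
`⋃ q`, no `a ⊆ Z` satisfies both `a ∩ ⋃ p ∈ p` and `a ∩ ⋃ q ∈ q`. -/
def Disj (δ : Ordinal.{u}) (p q : ZFSet.{u}) : Prop :=
  ∀ Z : ZFSet.{u}, Z.rank < δ → ZFSet.sUnion p ⊆ Z → ZFSet.sUnion q ⊆ Z →
    ∀ a ∈ Z.powerset, ¬ (a ∩ ZFSet.sUnion p ∈ p ∧ a ∩ ZFSet.sUnion q ∈ q)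

/-- The generic ultrafilter on `𝒫(X)` induced by a generic `G`:
`G_X = {S ∈ I⁺_{F_X} : S ∈ G}`. -/
def TowerZ.GX {δ : Ordinal.{u}} (T : TowerZ δ) (G : Set ZFSet.{u}) (X : ZFSet.{u}) :
    Set ZFSet.{u} :=
  {S : ZFSet.{u} | T.Pos X S ∧ S ∈ G}

section AuxZF

/-- complement of `S` inside `𝒫 X` -/
def cmplZ (X S : ZFSet.{u}) : ZFSet.{u} := ZFSet.sep (fun a => a ∉ S) X.powerset

lemma mem_cmplZ {X S a : ZFSet.{u}} : a ∈ cmplZ X S ↔ a ⊆ X ∧ a ∉ S := by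
  simp [cmplZ, ZFSet.mem_sep, ZFSet.mem_powerset]

lemma cmplZ_sub {X S : ZFSet.{u}} : cmplZ X S ⊆ X.powerset :=
  fun _ ha => (ZFSet.mem_sep.1 ha).1

lemma inter_sub_left {a b : ZFSet.{u}} : a ∩ b ⊆ a := fun _ hx => (ZFSet.mem_inter.1 hx).1
lemma inter_sub_right {a b : ZFSet.{u}} : a ∩ b ⊆ b := fun _ hx => (ZFSet.mem_inter.1 hx).2

lemma interZ_eq_self {a b : ZFSet.{u}} (h : a ⊆ b) : a ∩ b = a := by
  apply ZFSet.ext; intro x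
  rw [ZFSet.mem_inter]
  exact ⟨fun hx => hx.1, fun hx => ⟨hx, h hx⟩⟩

lemma interZ_absorb {a X U : ZFSet.{u}} (hUX : U ⊆ X) (h : a ∩ X ⊆ U) : a ∩ U = a ∩ X := by
  apply ZFSet.ext; intro x
  rw [ZFSet.mem_inter, ZFSet.mem_inter]
  exact ⟨fun hx => ⟨hx.1, hUX hx.2⟩, fun hx => ⟨hx.1, h (ZFSet.mem_inter.2 hx)⟩⟩

lemma interZ_inter {a b c : ZFSet.{u}} (h : c ⊆ b) : a ∩ b ∩ c = a ∩ c := by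
  apply ZFSet.ext; intro x
  simp only [ZFSet.mem_inter]
  exact ⟨fun hx => ⟨hx.1.1, hx.2⟩, fun hx => ⟨⟨hx.1, h hx.2⟩, hx.2⟩⟩

lemma mem_sub_sUnionZ {a p : ZFSet.{u}} (h : a ∈ p) : a ⊆ ZFSet.sUnion p :=
  fun _ hx => ZFSet.mem_sUnion.2 ⟨a, h, hx⟩

lemma sUnionZ_sub {p X : ZFSet.{u}} (h : p ⊆ X.powerset) : ZFSet.sUnion p ⊆ X := by
  intro x hx
  obtain ⟨a, hap, hxa⟩ := ZFSet.mem_sUnion.1 hx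
  exact ZFSet.mem_powerset.1 (h hap) hxa

lemma Tle_refl (p : ZFSet.{u}) : Tle p p :=
  ⟨fun _ h => h, fun a ha => by rw [interZ_eq_self (mem_sub_sUnionZ ha)]; exact ha⟩

lemma Tle_trans {p q s : ZFSet.{u}} (h1 : Tle p q) (h2 : Tle q s) : Tle p s := by
  refine ⟨fun x hx => h1.1 (h2.1 hx), fun a ha => ?_⟩
  have h3 := h2.2 _ (h1.2 a ha)
  rwa [interZ_inter h2.1] at h3

end AuxZF

namespace TowerZ

variable {δ : Ordinal.{u}} (T : TowerZ δ)

lemma univ_mem {X : ZFSet.{u}} (hX : X.rank < δ) : X.powerset ∈ T.F X := by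
  have h := (T.normal X hX).normal (fun x => ZFSet.sep (fun a => x ∈ a) X.powerset)
    (fun x hx => (T.normal X hX).fine x hx)
  have he : ZFSet.sep (fun a => ∀ x ∈ a, a ∈ ZFSet.sep (fun b => x ∈ b) X.powerset)
      X.powerset = X.powerset := by
    apply ZFSet.ext; intro a
    simp only [ZFSet.mem_sep]
    exact ⟨fun h => h.1, fun h => ⟨h, fun x hx => ⟨h, hx⟩⟩⟩
  rwa [he] at h

lemma pos_of_mem {X C : ZFSet.{u}} (hX : X.rank < δ) (hC : C ∈ T.F X) : T.Pos X C := by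
  refine ⟨(T.normal X hX).mem_sub C hC, fun hc => ?_⟩
  have h2 := (T.normal X hX).inter_mem C hC _ hc
  have he : C ∩ ZFSet.sep (fun a => a ∉ C) X.powerset = ∅ := by
    rw [ZFSet.eq_empty]; intro a ha
    rw [ZFSet.mem_inter, ZFSet.mem_sep] at ha
    exact ha.2.2 ha.1
  rw [he] at h2
  exact (T.normal X hX).proper h2

lemma pos_meets {X S C : ZFSet.{u}} (hX : X.rank < δ) (hS : T.Pos X S) (hC : C ∈ T.F X) :
    ∃ a, a ∈ S ∧ a ∈ C := by
  by_contra h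
  push_neg at h
  apply hS.2
  refine (T.normal X hX).superset_mem C hC _ ?_ cmplZ_sub
  intro a ha
  rw [ZFSet.mem_sep]
  exact ⟨(T.normal X hX).mem_sub C hC ha, fun haS => h a haS ha⟩

lemma pos_nonempty {X S : ZFSet.{u}} (hX : X.rank < δ) (hS : T.Pos X S) : ∃ a, a ∈ S := by
  obtain ⟨a, ha, _⟩ := T.pos_meets hX hS (T.univ_mem hX)
  exact ⟨a, ha⟩

lemma sUnion_eq_of_pos {X S : ZFSet.{u}} (hX : X.rank < δ) (hS : T.Pos X S) :
    ZFSet.sUnion S = X := by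
  apply ZFSet.ext; intro x
  constructor
  · exact fun hx => sUnionZ_sub hS.1 hx
  · intro hx
    obtain ⟨a, haS, haC⟩ := T.pos_meets hX hS ((T.normal X hX).fine x hx)
    rw [ZFSet.mem_sep] at haC
    exact ZFSet.mem_sUnion.2 ⟨a, haS, haC.2⟩

lemma not_pos_iff {X S : ZFSet.{u}} (hS : S ⊆ X.powerset) :
    ¬ T.Pos X S ↔ cmplZ X S ∈ T.F X := by
  unfold Pos
  constructor
  · intro h
    by_contra hc
    exact h ⟨hS, hc⟩
  · intro h hc
    exact hc.2 h

lemma cond_elim {p : ZFSet.{u}} (hp : T.Cond p) :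
    (ZFSet.sUnion p).rank < δ ∧ T.Pos (ZFSet.sUnion p) p := by
  obtain ⟨Z, hZ, hpos⟩ := hp
  have he := T.sUnion_eq_of_pos hZ hpos
  rw [he]
  exact ⟨hZ, hpos⟩

lemma cond_of_pos {X S : ZFSet.{u}} (hX : X.rank < δ) (h : T.Pos X S) : T.Cond S :=
  ⟨X, hX, h⟩

lemma compat_symm {p q : ZFSet.{u}} (h : T.Compat p q) : T.Compat q p := by
  obtain ⟨r, h1, h2, h3⟩ := h
  exact ⟨r, h1, h3, h2⟩

lemma compat_self {p : ZFSet.{u}} (h : T.Cond p) : T.Compat p p :=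
  ⟨p, h, Tle_refl p, Tle_refl p⟩

/-- If `r` is positive w.r.t. `W` and every `a ∈ r` traces into `S ⊆ 𝒫 X`, `X ⊆ W`,
then `S` is positive w.r.t. `X`. -/
lemma pos_push {X W r S : ZFSet.{u}} (hX : X.rank < δ) (hW : W.rank < δ) (hXW : X ⊆ W)
    (hr : T.Pos W r) (hS : S ⊆ X.powerset) (htr : ∀ a ∈ r, a ∩ X ∈ S) : T.Pos X S := by
  refine ⟨hS, fun hc => ?_⟩
  have hlift := (T.projects X W hX hW hXW _ cmplZ_sub).1 hc
  apply hr.2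
  refine (T.normal W hW).superset_mem _ hlift _ ?_ cmplZ_sub
  intro a ha
  rw [ZFSet.mem_sep] at ha
  rw [ZFSet.mem_sep]
  refine ⟨ha.1, fun har => ?_⟩
  exact (mem_cmplZ.1 ha.2).2 (htr a har)

/-- The lift of a positive set is positive. -/
lemma pos_lift {Z W p : ZFSet.{u}} (hZ : Z.rank < δ) (hW : W.rank < δ) (hZW : Z ⊆ W)
    (hp : T.Pos Z p) : T.Pos W (ZFSet.sep (fun a => a ∩ Z ∈ p) W.powerset) := by
  refine ⟨fun _ ha => (ZFSet.mem_sep.1 ha).1, fun hc => ?_⟩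
  apply hp.2
  show cmplZ Z p ∈ T.F Z
  rw [T.projects Z W hZ hW hZW _ cmplZ_sub]
  have he : ZFSet.sep (fun a => a ∩ Z ∈ cmplZ Z p) W.powerset
      = cmplZ W (ZFSet.sep (fun a => a ∩ Z ∈ p) W.powerset) := by
    apply ZFSet.ext; intro a
    simp only [mem_cmplZ, ZFSet.mem_sep, ZFSet.mem_powerset]
    constructor
    · rintro ⟨h1, _, h3⟩
      exact ⟨h1, fun hh => h3 hh.2⟩
    · rintro ⟨h1, h2⟩
      exact ⟨h1, inter_sub_right, fun hh => h2 ⟨h1, hh⟩⟩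
  rw [he]
  exact hc

/-- From positivity and full trace, get `Tle`. -/
lemma tle_of_trace {W r X S : ZFSet.{u}} (hW : W.rank < δ) (hr : T.Pos W r)
    (hS : S ⊆ X.powerset) (hXW : X ⊆ W) (htr : ∀ a ∈ r, a ∩ X ∈ S) : Tle r S := by
  have hUr : ZFSet.sUnion r = W := T.sUnion_eq_of_pos hW hr
  have hUS : ZFSet.sUnion S ⊆ X := sUnionZ_sub hS
  constructor
  · intro x hx
    rw [hUr]
    exact hXW (hUS hx)
  · intro a ha
    have h1 : a ∩ X ∈ S := htr a ha
    have h2 : a ∩ X ⊆ ZFSet.sUnion S := mem_sub_sUnionZ h1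
    rw [interZ_absorb hUS h2]
    exact h1

/-- The meet of a condition with base `Z` and a set `S ⊆ 𝒫 X`. -/
def meetSet (Z X p S : ZFSet.{u}) : ZFSet.{u} :=
  ZFSet.sep (fun a => a ∩ Z ∈ p ∧ a ∩ X ∈ S) (Z ∪ X).powerset

lemma rank_union_lt {Z X : ZFSet.{u}} {δ : Ordinal.{u}} (hZ : Z.rank < δ)
    (hX : X.rank < δ) : (Z ∪ X).rank < δ := by
  rw [ZFSet.rank_union]
  exact max_lt hZ hX

lemma compat_of_meet_pos {Z X p S : ZFSet.{u}} (hZ : Z.rank < δ) (hX : X.rank < δ)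
    (hp : p ⊆ Z.powerset) (hS : S ⊆ X.powerset)
    (hpos : T.Pos (Z ∪ X) (meetSet Z X p S)) : T.Compat p S := by
  have hW : (Z ∪ X).rank < δ := rank_union_lt hZ hX
  refine ⟨meetSet Z X p S, ⟨Z ∪ X, hW, hpos⟩, ?_, ?_⟩
  · exact T.tle_of_trace hW hpos hp (fun x hx => ZFSet.mem_union.2 (Or.inl hx))
      (fun a ha => ((ZFSet.mem_sep.1 ha).2).1)
  · exact T.tle_of_trace hW hpos hS (fun x hx => ZFSet.mem_union.2 (Or.inr hx))
      (fun a ha => ((ZFSet.mem_sep.1 ha).2).2)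

lemma meet_pos_filter {Z X p C : ZFSet.{u}} (hZ : Z.rank < δ) (hX : X.rank < δ)
    (hp : T.Pos Z p) (hC : C ∈ T.F X) : T.Pos (Z ∪ X) (meetSet Z X p C) := by
  have hW : (Z ∪ X).rank < δ := rank_union_lt hZ hX
  have hlp := T.pos_lift hZ hW (fun x hx => ZFSet.mem_union.2 (Or.inl hx)) hp
  refine ⟨fun _ ha => (ZFSet.mem_sep.1 ha).1, fun hc => ?_⟩
  have hlC : ZFSet.sep (fun a => a ∩ X ∈ C) (Z ∪ X).powerset ∈ T.F (Z ∪ X) :=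
    (T.projects X (Z ∪ X) hX hW (fun x hx => ZFSet.mem_union.2 (Or.inr hx)) C
      ((T.normal X hX).mem_sub C hC)).1 hC
  apply hlp.2
  have hmem := (T.normal (Z ∪ X) hW).inter_mem _ hc _ hlC
  refine (T.normal (Z ∪ X) hW).superset_mem _ hmem _ ?_ cmplZ_sub
  intro a ha
  rw [ZFSet.mem_inter, ZFSet.mem_sep, ZFSet.mem_sep] at ha
  obtain ⟨⟨ha1, ha2⟩, _, ha3⟩ := ha
  rw [ZFSet.mem_sep]
  refine ⟨ha1, fun hmp => ?_⟩
  rw [ZFSet.mem_sep] at hmp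
  exact ha2 (ZFSet.mem_sep.2 ⟨ha1, hmp.2, ha3⟩)

lemma meet_pos_or {Z X p S : ZFSet.{u}} (hZ : Z.rank < δ) (hX : X.rank < δ)
    (hp : T.Pos Z p) (hS : S ⊆ X.powerset) :
    T.Pos (Z ∪ X) (meetSet Z X p S) ∨ T.Pos (Z ∪ X) (meetSet Z X p (cmplZ X S)) := by
  have hW : (Z ∪ X).rank < δ := rank_union_lt hZ hX
  have hlp := T.pos_lift hZ hW (fun x hx => ZFSet.mem_union.2 (Or.inl hx)) hp
  by_contra h
  push_neg at h
  obtain ⟨h1, h2⟩ := h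
  have hc1 : cmplZ (Z ∪ X) (meetSet Z X p S) ∈ T.F (Z ∪ X) :=
    (T.not_pos_iff (fun _ ha => (ZFSet.mem_sep.1 ha).1)).1 h1
  have hc2 : cmplZ (Z ∪ X) (meetSet Z X p (cmplZ X S)) ∈ T.F (Z ∪ X) :=
    (T.not_pos_iff (fun _ ha => (ZFSet.mem_sep.1 ha).1)).1 h2
  apply hlp.2
  have hmem := (T.normal (Z ∪ X) hW).inter_mem _ hc1 _ hc2
  refine (T.normal (Z ∪ X) hW).superset_mem _ hmem _ ?_ cmplZ_sub
  intro a ha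
  rw [ZFSet.mem_inter, mem_cmplZ, mem_cmplZ] at ha
  obtain ⟨⟨haW, ha1⟩, _, ha2⟩ := ha
  show a ∈ cmplZ (Z ∪ X) _
  rw [mem_cmplZ]
  refine ⟨haW, fun hlpm => ?_⟩
  rw [ZFSet.mem_sep, ZFSet.mem_powerset] at hlpm
  by_cases hXS : a ∩ X ∈ S
  · exact ha1 (ZFSet.mem_sep.2 ⟨ZFSet.mem_powerset.2 haW, hlpm.2, hXS⟩)
  · exact ha2 (ZFSet.mem_sep.2 ⟨ZFSet.mem_powerset.2 haW, hlpm.2,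
      mem_cmplZ.2 ⟨inter_sub_right, hXS⟩⟩)

/-- Every element of every filter `F X` belongs to any generic `G`. -/
lemma filter_mem_G {G : Set ZFSet.{u}} (hG : T.Generic G) {X C : ZFSet.{u}}
    (hX : X.rank < δ) (hC : C ∈ T.F X) : C ∈ G := by
  have hposC := T.pos_of_mem hX hC
  have hmax : T.MaxAC {C} := by
    refine ⟨?_, ?_, ?_⟩
    · intro p hp
      rw [Set.mem_singleton_iff] at hp
      subst hp
      exact ⟨X, hX, hposC⟩
    · intro p hp q hq hne
      rw [Set.mem_singleton_iff] at hp hq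
      exact absurd (hp.trans hq.symm) hne
    · intro p hp
      obtain ⟨hZrank, hZpos⟩ := T.cond_elim hp
      exact ⟨C, rfl, T.compat_of_meet_pos hZrank hX hZpos.1
        ((T.normal X hX).mem_sub C hC) (T.meet_pos_filter hZrank hX hZpos hC)⟩
  obtain ⟨p, hpA, hpG⟩ := hG.2.2.2 _ hmax
  rw [Set.mem_singleton_iff] at hpA
  rwa [hpA] at hpG

end TowerZ
namespace TowerZ

variable {δ : Ordinal.{u}} (T : TowerZ δ)

lemma ultra_G {G : Set ZFSet.{u}} (hG : T.Generic G) {X S : ZFSet.{u}}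
    (hX : X.rank < δ) (hS : S ⊆ X.powerset) :
    S ∈ T.GX G X ∨ cmplZ X S ∈ T.GX G X := by
  by_cases h1 : T.Pos X S
  · by_cases h2 : T.Pos X (cmplZ X S)
    · have hincomp : ¬ T.Compat S (cmplZ X S) := by
        rintro ⟨r, hr, hrs, hrc⟩
        obtain ⟨hWrank, hWpos⟩ := T.cond_elim hr
        obtain ⟨a, har⟩ := T.pos_nonempty hWrank hWpos
        have e1 := hrs.2 a har
        have e2 := hrc.2 a har
        rw [T.sUnion_eq_of_pos hX h1] at e1
        rw [T.sUnion_eq_of_pos hX h2] at e2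
        exact (mem_cmplZ.1 e2).2 e1
      have hmax : T.MaxAC {S, cmplZ X S} := by
        refine ⟨?_, ?_, ?_⟩
        · intro p hp
          rcases Set.mem_insert_iff.1 hp with rfl | hp'
          · exact ⟨X, hX, h1⟩
          · rw [Set.mem_singleton_iff] at hp'
            subst hp'
            exact ⟨X, hX, h2⟩
        · intro p hp q hq hne
          rcases Set.mem_insert_iff.1 hp with rfl | hp' <;>
            rcases Set.mem_insert_iff.1 hq with h | h
          · exact absurd h.symm hne
          · rw [Set.mem_singleton_iff] at h
            subst h
            exact hincomp
          · rw [Set.mem_singleton_iff] at hp'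
            subst hp'
            subst h
            exact fun hc => hincomp (T.compat_symm hc)
          · rw [Set.mem_singleton_iff] at hp' h
            exact absurd (hp'.trans h.symm) hne
        · intro p hp
          obtain ⟨hZr, hZp⟩ := T.cond_elim hp
          rcases T.meet_pos_or hZr hX hZp hS with hpos | hpos
          · exact ⟨S, Set.mem_insert _ _, T.compat_of_meet_pos hZr hX hZp.1 hS hpos⟩
          · exact ⟨cmplZ X S, Set.mem_insert_iff.2 (Or.inr rfl),
              T.compat_of_meet_pos hZr hX hZp.1 cmplZ_sub hpos⟩
      obtain ⟨p, hpA, hpG⟩ := hG.2.2.2 _ hmax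
      rcases Set.mem_insert_iff.1 hpA with rfl | hp'
      · exact Or.inl ⟨h1, hpG⟩
      · rw [Set.mem_singleton_iff] at hp'
        subst hp'
        exact Or.inr ⟨h2, hpG⟩
    · have hc : cmplZ X (cmplZ X S) ∈ T.F X := (T.not_pos_iff cmplZ_sub).1 h2
      have he : cmplZ X (cmplZ X S) = S := by
        apply ZFSet.ext; intro a
        simp only [mem_cmplZ]
        constructor
        · rintro ⟨ha1, ha2⟩
          by_contra hna
          exact ha2 ⟨ha1, hna⟩
        · intro ha
          exact ⟨ZFSet.mem_powerset.1 (hS ha), fun hc' => hc'.2 ha⟩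
      rw [he] at hc
      exact Or.inl ⟨T.pos_of_mem hX hc, T.filter_mem_G hG hX hc⟩
  · have hc := (T.not_pos_iff hS).1 h1
    exact Or.inr ⟨T.pos_of_mem hX hc, T.filter_mem_G hG hX hc⟩

lemma exists_maxAC {B : Set ZFSet.{u}} (hBc : ∀ p ∈ B, T.Cond p)
    (hBa : ∀ p ∈ B, ∀ q ∈ B, p ≠ q → ¬ T.Compat p q) :
    ∃ A : Set ZFSet.{u}, B ⊆ A ∧ T.MaxAC A := by
  classical
  set 𝒜 : Set (Set ZFSet.{u}) :=
    {A | (∀ p ∈ A, T.Cond p) ∧ (∀ p ∈ A, ∀ q ∈ A, p ≠ q → ¬ T.Compat p q)} with h𝒜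
  have hchain : ∀ c ⊆ 𝒜, IsChain (fun x1 x2 => x1 ⊆ x2) c → c.Nonempty →
      ∃ ub ∈ 𝒜, ∀ s ∈ c, s ⊆ ub := by
    intro c hc hch _
    refine ⟨⋃₀ c, ⟨?_, ?_⟩, fun s hs => Set.subset_sUnion_of_mem hs⟩
    · rintro p ⟨A, hA, hpA⟩
      exact (hc hA).1 p hpA
    · rintro p ⟨A1, hA1, hp1⟩ q ⟨A2, hA2, hq2⟩ hne'
      rcases eq_or_ne A1 A2 with rfl | hA12
      · exact (hc hA1).2 p hp1 q hq2 hne'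
      · rcases hch hA1 hA2 hA12 with h | h
        · exact (hc hA2).2 p (h hp1) q hq2 hne'
        · exact (hc hA1).2 p hp1 q (h hq2) hne'
  obtain ⟨m, hBm, hm⟩ := zorn_subset_nonempty 𝒜 hchain B ⟨hBc, hBa⟩
  refine ⟨m, hBm, hm.1.1, hm.1.2, ?_⟩
  intro p hp
  by_contra hnc
  push_neg at hnc
  have hpm : p ∉ m := fun hpm => hnc p hpm (T.compat_self hp)
  have hins : insert p m ∈ 𝒜 := by
    constructor
    · intro q hq
      rcases Set.mem_insert_iff.1 hq with rfl | hq'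
      · exact hp
      · exact hm.1.1 q hq'
    · intro q1 hq1 q2 hq2 hne
      rcases Set.mem_insert_iff.1 hq1 with rfl | hq1' <;>
        rcases Set.mem_insert_iff.1 hq2 with h | hq2'
      · exact absurd h.symm hne
      · exact fun hc => hnc q2 hq2' hc
      · subst h
        exact fun hc => hnc q1 hq1' (T.compat_symm hc)
      · exact hm.1.2 q1 hq1' q2 hq2' hne
  exact hpm (hm.2 hins (Set.subset_insert p m) (Set.mem_insert p m))

lemma normal_G {G : Set ZFSet.{u}} (hG : T.Generic G) {X S : ZFSet.{u}}
    (hX : X.rank < δ) (hS : S ∈ T.GX G X) (f : ZFSet.{u} → ZFSet.{u})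
    (hf : ∀ a ∈ S, f a ∈ a) :
    ∃ x ∈ X, ZFSet.sep (fun a => f a = x) S ∈ T.GX G X := by
  classical
  obtain ⟨hSpos, hSG⟩ := hS
  set B : Set ZFSet.{u} :=
    {q | ∃ x, x ∈ X ∧ q = ZFSet.sep (fun a => f a = x) S ∧ T.Pos X q} with hB
  have hBc : ∀ p ∈ B, T.Cond p := by
    rintro p ⟨x, hx, rfl, hpos⟩
    exact ⟨X, hX, hpos⟩
  have hBa : ∀ p ∈ B, ∀ q ∈ B, p ≠ q → ¬ T.Compat p q := by
    rintro p ⟨x, hx, rfl, hposx⟩ q ⟨y, hy, rfl, hposy⟩ hne ⟨r, hr, hrp, hrq⟩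
    obtain ⟨hWr, hWp⟩ := T.cond_elim hr
    obtain ⟨a, har⟩ := T.pos_nonempty hWr hWp
    have e1 := hrp.2 a har
    have e2 := hrq.2 a har
    rw [T.sUnion_eq_of_pos hX hposx] at e1
    rw [T.sUnion_eq_of_pos hX hposy] at e2
    rw [ZFSet.mem_sep] at e1 e2
    exact hne (by rw [e1.2.symm.trans e2.2])
  have key : ∀ r, T.Cond r → Tle r S →
      ∃ q ∈ B, ∃ r', T.Cond r' ∧ Tle r' r ∧ Tle r' q := by
    intro r hr hrS
    obtain ⟨hWr, hWp⟩ := T.cond_elim hr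
    have hXW : X ⊆ ZFSet.sUnion r := by
      have h := hrS.1
      rwa [T.sUnion_eq_of_pos hX hSpos] at h
    have htr : ∀ a ∈ r, a ∩ X ∈ S := by
      intro a ha
      have h := hrS.2 a ha
      rwa [T.sUnion_eq_of_pos hX hSpos] at h
    have hex : ∃ x, x ∈ X ∧
        T.Pos (ZFSet.sUnion r) (ZFSet.sep (fun a => f (a ∩ X) = x) r) := by
      by_contra hnex
      push_neg at hnex
      have hcm : ∀ x, x ∈ X →
          cmplZ (ZFSet.sUnion r) (ZFSet.sep (fun a => f (a ∩ X) = x) r)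
            ∈ T.F (ZFSet.sUnion r) := by
        intro x hx
        exact (T.not_pos_iff (fun b hb => hWp.1 ((ZFSet.mem_sep.1 hb).1))).1 (hnex x hx)
      set A : ZFSet.{u} → ZFSet.{u} := fun x =>
        if x ∈ X then cmplZ (ZFSet.sUnion r) (ZFSet.sep (fun a => f (a ∩ X) = x) r)
        else (ZFSet.sUnion r).powerset with hA
      have hAF : ∀ x ∈ ZFSet.sUnion r, A x ∈ T.F (ZFSet.sUnion r) := by
        intro x _
        by_cases hxX : x ∈ X
        · rw [hA]; simp only [if_pos hxX]; exact hcm x hxX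
        · rw [hA]; simp only [if_neg hxX]; exact T.univ_mem hWr
      have hN := (T.normal _ hWr).normal A hAF
      obtain ⟨a, har, haN⟩ := T.pos_meets hWr hWp hN
      rw [ZFSet.mem_sep] at haN
      have haS : a ∩ X ∈ S := htr a har
      have hfa : f (a ∩ X) ∈ a ∩ X := hf _ haS
      have hfX : f (a ∩ X) ∈ X := (ZFSet.mem_inter.1 hfa).2
      have hfa' : f (a ∩ X) ∈ a := (ZFSet.mem_inter.1 hfa).1
      have hmem := haN.2 _ hfa'
      rw [hA] at hmem
      simp only [if_pos hfX] at hmem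
      exact (mem_cmplZ.1 hmem).2 (ZFSet.mem_sep.2 ⟨har, rfl⟩)
    obtain ⟨x, hxX, hposrx⟩ := hex
    have htrx : ∀ a ∈ ZFSet.sep (fun a => f (a ∩ X) = x) r,
        a ∩ X ∈ ZFSet.sep (fun a => f a = x) S := by
      intro a ha
      rw [ZFSet.mem_sep] at ha ⊢
      exact ⟨htr a ha.1, ha.2⟩
    have hqpos : T.Pos X (ZFSet.sep (fun a => f a = x) S) :=
      T.pos_push hX hWr hXW hposrx (fun b hb => hSpos.1 ((ZFSet.mem_sep.1 hb).1)) htrx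
    refine ⟨_, ⟨x, hxX, rfl, hqpos⟩, ZFSet.sep (fun a => f (a ∩ X) = x) r,
      ⟨ZFSet.sUnion r, hWr, hposrx⟩, ?_, ?_⟩
    · refine T.tle_of_trace hWr hposrx hWp.1 (fun _ h => h) ?_
      intro a ha
      rw [interZ_eq_self (ZFSet.mem_powerset.1 (hWp.1 ((ZFSet.mem_sep.1 ha).1)))]
      exact (ZFSet.mem_sep.1 ha).1
    · exact T.tle_of_trace hWr hposrx (fun b hb => hSpos.1 ((ZFSet.mem_sep.1 hb).1)) hXW htrx
  obtain ⟨A, hBA, hmax⟩ := T.exists_maxAC hBc hBa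
  obtain ⟨p0, hp0A, hp0G⟩ := hG.2.2.2 A hmax
  obtain ⟨r, hrG, hrp0, hrS⟩ := hG.2.2.1 p0 hp0G S hSG
  obtain ⟨q, hqB, r', hr'c, hr'r, hr'q⟩ := key r (hG.1 r hrG) hrS
  have hcompat : T.Compat p0 q := ⟨r', hr'c, Tle_trans hr'r hrp0, hr'q⟩
  have hp0q : p0 = q := by
    by_contra hne
    exact hmax.2.1 p0 hp0A q (hBA hqB) hne hcompat
  obtain ⟨x, hxX, hqe, hqpos⟩ := hqB
  refine ⟨x, hxX, ?_⟩
  rw [← hqe]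
  exact ⟨hqpos, hp0q ▸ hp0G⟩

end TowerZ
/-- Let `P` be a tower of height `δ` (`δ` a limit ordinal) and `G ⊆ P` generic.
Then for each `X ∈ V_δ`, `G_X = {S F_X-positive : S ∈ G}` is a `V`-normal
ultrafilter on `𝒫(X)` extending `F_X`, and if `X ⊆ Y` then `G_Y` projects to `G_X`:
for `S ∈ G_Y`, `{a ∩ X : a ∈ S} ∈ G_X`. -/
theorem stmt13 (δ : Ordinal.{u}) (hδ : Order.IsSuccLimit δ) (T : TowerZ δ)
    (G : Set ZFSet.{u}) (hG : T.Generic G) :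
    (∀ X : ZFSet.{u}, X.rank < δ →
      -- G_X extends F_X
      (∀ C ∈ T.F X, C ∈ T.GX G X) ∧
      -- G_X is a proper filter on 𝒫(X)
      ((∅ : ZFSet.{u}) ∉ T.GX G X) ∧
      (∀ S ∈ T.GX G X, ∀ S' ∈ T.GX G X, S ∩ S' ∈ T.GX G X) ∧
      (∀ S ∈ T.GX G X, ∀ S' : ZFSet.{u}, S ⊆ S' → S' ⊆ X.powerset → S' ∈ T.GX G X) ∧
      -- G_X is an ultrafilter on 𝒫(X)
      (∀ S : ZFSet.{u}, S ⊆ X.powerset →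
        (S ∈ T.GX G X ∨ ZFSet.sep (fun a => a ∉ S) X.powerset ∈ T.GX G X)) ∧
      -- G_X is fine
      (∀ x ∈ X, ZFSet.sep (fun a => x ∈ a) X.powerset ∈ T.GX G X) ∧
      -- G_X is V-normal: choice functions are constant on a set in G_X
      (∀ S ∈ T.GX G X, ∀ f : ZFSet.{u} → ZFSet.{u}, (∀ a ∈ S, f a ∈ a) →
        ∃ x ∈ X, ZFSet.sep (fun a => f a = x) S ∈ T.GX G X)) ∧
    -- projection
    (∀ X Y : ZFSet.{u}, X.rank < δ → Y.rank < δ → X ⊆ Y →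
      ∀ S ∈ T.GX G Y,
        ZFSet.sep (fun b => ∃ a ∈ S, b = a ∩ X) X.powerset ∈ T.GX G X) := by
  constructor
  · intro X hX
    refine ⟨?_, ?_, ?_, ?_, ?_, ?_, ?_⟩
    · intro C hC
      exact ⟨T.pos_of_mem hX hC, T.filter_mem_G hG hX hC⟩
    · rintro ⟨hpos, _⟩
      apply hpos.2
      have he : ZFSet.sep (fun a => a ∉ (∅ : ZFSet.{u})) X.powerset = X.powerset := by
        apply ZFSet.ext; intro a
        rw [ZFSet.mem_sep]
        exact ⟨fun h => h.1, fun h => ⟨h, ZFSet.notMem_empty a⟩⟩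
      rw [he]
      exact T.univ_mem hX
    · intro S hSx S' hS'x
      obtain ⟨hp, hg⟩ := hSx
      obtain ⟨hp', hg'⟩ := hS'x
      obtain ⟨r, hrG, hr1, hr2⟩ := hG.2.2.1 S hg S' hg'
      obtain ⟨hWr, hWp⟩ := T.cond_elim (hG.1 r hrG)
      have hXW : X ⊆ ZFSet.sUnion r := by
        have h := hr1.1
        rwa [T.sUnion_eq_of_pos hX hp] at h
      have htr : ∀ a ∈ r, a ∩ X ∈ S ∩ S' := by
        intro a ha
        have e1 := hr1.2 a ha
        have e2 := hr2.2 a ha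
        rw [T.sUnion_eq_of_pos hX hp] at e1
        rw [T.sUnion_eq_of_pos hX hp'] at e2
        exact ZFSet.mem_inter.2 ⟨e1, e2⟩
      have hsub : S ∩ S' ⊆ X.powerset := fun b hb => hp.1 (inter_sub_left hb)
      have hpos := T.pos_push hX hWr hXW hWp hsub htr
      exact ⟨hpos, hG.2.1 r hrG _ ⟨X, hX, hpos⟩ (T.tle_of_trace hWr hWp hsub hXW htr)⟩
    · intro S hSx S' hsub hsub'
      obtain ⟨hp, hg⟩ := hSx
      have hpos' : T.Pos X S' := by
        refine ⟨hsub', fun hc => ?_⟩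
        apply hp.2
        refine (T.normal X hX).superset_mem _ hc _ ?_ cmplZ_sub
        intro a ha
        rw [ZFSet.mem_sep] at ha
        rw [ZFSet.mem_sep]
        exact ⟨ha.1, fun haS => ha.2 (hsub haS)⟩
      have htr : ∀ a ∈ S, a ∩ X ∈ S' := by
        intro a ha
        rw [interZ_eq_self (ZFSet.mem_powerset.1 (hp.1 ha))]
        exact hsub ha
      exact ⟨hpos', hG.2.1 S hg S' ⟨X, hX, hpos'⟩
        (T.tle_of_trace hX hp hsub' (fun _ h => h) htr)⟩
    · intro S hsub
      exact T.ultra_G hG hX hsub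
    · intro x hx
      have hC := (T.normal X hX).fine x hx
      exact ⟨T.pos_of_mem hX hC, T.filter_mem_G hG hX hC⟩
    · intro S hSx f hf
      exact T.normal_G hG hX hSx f hf
  · intro X Y hX hY hXY S hSy
    obtain ⟨hp, hg⟩ := hSy
    have hsub : ZFSet.sep (fun b => ∃ a ∈ S, b = a ∩ X) X.powerset ⊆ X.powerset :=
      fun b hb => (ZFSet.mem_sep.1 hb).1
    have htr : ∀ a ∈ S, a ∩ X ∈ ZFSet.sep (fun b => ∃ a ∈ S, b = a ∩ X) X.powerset := by
      intro a ha
      exact ZFSet.mem_sep.2 ⟨ZFSet.mem_powerset.2 inter_sub_right, a, ha, rfl⟩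
    have hpos := T.pos_push hX hY hXY hp hsub htr
    exact ⟨hpos, hG.2.1 S hg _ ⟨X, hX, hpos⟩ (T.tle_of_trace hY hp hsub hXY htr)⟩
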